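/- Let H = H₁⊗⋯⊗Hₘ with finite-dimensional complex Hilbert spaces H_μ, and let G be a finite abelian group with |G| ≥ (dim H)². Then a Hermitian operator A on H is separable if and only if there exist mappings Φ^μ : G → H_μ such that A = Σ_{g∈G} |(Φ¹⋆⋯⋆Φᵐ)(g)⟩⟨(Φ¹⋆⋯⋆Φᵐ)(g)|, where ⋆ denotes the tensor convolution. -/

import Mathlib

noncomputable section

/-- The rank-one operator `|u⟩⟨u| : w ↦ ⟪u, w⟫ • u`. -/
def rankOne {E : Type*} [NormedAddCommGroup E] [InnerProductSpace ℂ E] (u : E) : E →L[ℂ] E :=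
  (innerSL ℂ u).smulRight u

variable {m : ℕ} {H : Fin (m + 1) → Type*}
  [∀ μ, NormedAddCommGroup (H μ)] [∀ μ, InnerProductSpace ℂ (H μ)]
  {E : Type*} [NormedAddCommGroup E] [InnerProductSpace ℂ E]

/-- The tensor convolution `(Φ¹ ⋆ ⋯ ⋆ Φᵐ)(g) = Σ_{g₂,…,gₘ} Φ¹(g−g₂−⋯−gₘ)⊗Φ²(g₂)⊗⋯⊗Φᵐ(gₘ)`,
realized through a multilinear map `T` playing the role of the tensor product. -/
def tensorConv {G : Type*} [AddCommGroup G] [Fintype G]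
    (T : MultilinearMap ℂ H E) (Φ : ∀ μ, G → H μ) (g : G) : E :=
  ∑ k : Fin m → G, T fun μ => Φ μ (Fin.cons (α := fun _ => G) (g - ∑ j, k j) k μ)

/-- An operator is separable (w.r.t. the tensor structure `T`) if it is a finite sum of
positive multiples of projectors onto simple tensors. -/
def IsSeparableOp (T : MultilinearMap ℂ H E) (A : E →L[ℂ] E) : Prop :=
  ∃ (P : ℕ) (c : Fin P → ℝ) (v : Fin P → ∀ μ, H μ),
    (∀ p, 0 < c p) ∧ A = ∑ p, (c p : ℂ) • rankOne (T (v p))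

open ComplexConjugate

/-! ### Auxiliary lemmas -/

lemma rankOne_apply' {E : Type*} [NormedAddCommGroup E] [InnerProductSpace ℂ E] (u w : E) :
    rankOne u w = (inner ℂ u w : ℂ) • u := rfl

lemma rankOne_zero' {E : Type*} [NormedAddCommGroup E] [InnerProductSpace ℂ E] :
    rankOne (0 : E) = 0 := by
  ext w; simp [rankOne_apply']

lemma rankOne_smul' {E : Type*} [NormedAddCommGroup E] [InnerProductSpace ℂ E] (a : ℂ) (u : E) :
    rankOne (a • u) = (conj a * a) • rankOne u := by
  ext w
  simp only [rankOne_apply', ContinuousLinearMap.smul_apply, inner_smul_left]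
  rw [smul_smul, smul_smul]
  ring_nf

lemma rankOne_adjoint' {E : Type*} [NormedAddCommGroup E] [InnerProductSpace ℂ E]
    [FiniteDimensional ℂ E] (u : E) :
    ContinuousLinearMap.adjoint (rankOne u) = rankOne u := by
  symm
  rw [ContinuousLinearMap.eq_adjoint_iff]
  intro x y
  simp [rankOne_apply', inner_smul_left, inner_smul_right]
  ring

/-- Orthogonality of characters of a finite abelian group. -/
lemma addChar_orth' {G : Type*} [AddCommGroup G] [Fintype G] (χ χ' : AddChar G ℂ) :
    ∑ g : G, χ g * conj (χ' g) = if χ = χ' then (Fintype.card G : ℂ) else 0 := by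
  classical
  have h1 : ∀ g : G, χ g * conj (χ' g) = (χ * χ'⁻¹) g := by
    intro g
    rw [AddChar.mul_apply, AddChar.inv_apply, AddChar.map_neg_eq_conj]
  simp_rw [h1]
  rw [AddChar.sum_eq_ite]
  congr 1
  · rw [eq_iff_iff]
    constructor
    · intro h
      have : χ * χ'⁻¹ = 1 := h
      rwa [mul_inv_eq_one] at this
    · intro h; subst h; show χ * χ⁻¹ = 1; rw [mul_inv_cancel]

/-- Conic Carathéodory: a nonnegative combination can be rewritten as a nonnegative
combination over a linearly independent subfamily. -/
lemma cone_reduce' {M ι : Type*} [AddCommGroup M] [Module ℝ M] (f : ι → M) :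
    ∀ (n : ℕ) (s : Finset ι), s.card ≤ n → ∀ (c : ι → ℝ), (∀ p ∈ s, 0 ≤ c p) →
      ∃ (t : Finset ι) (c' : ι → ℝ), t ⊆ s ∧ (∀ p ∈ t, 0 ≤ c' p) ∧
        (∑ p ∈ t, c' p • f p = ∑ p ∈ s, c p • f p) ∧
        LinearIndependent ℝ fun p : t => f p := by
  classical
  intro n
  induction n with
  | zero =>
    intro s hs c hc
    have : s = ∅ := Finset.card_eq_zero.mp (Nat.le_zero.mp hs)
    subst this
    exact ⟨∅, c, subset_rfl, fun p hp => absurd hp (Finset.notMem_empty p), rfl,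
      linearIndependent_empty_type⟩
  | succ n ih =>
    intro s hs c hc
    by_cases hli : LinearIndependent ℝ fun p : s => f p
    · exact ⟨s, c, subset_rfl, hc, rfl, hli⟩
    obtain ⟨g, hgsum, p₁, hgp₁⟩ := Fintype.not_linearIndependent_iff.mp hli
    set sgn : ℝ := if 0 < g p₁ then 1 else -1 with hsgn
    set Gc : ι → ℝ := fun p => if h : p ∈ s then sgn * g ⟨p, h⟩ else 0 with hGc
    have hGsum : ∑ p ∈ s, Gc p • f p = 0 := by
      rw [← Finset.sum_coe_sort s (fun p => Gc p • f p)]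
      have : ∀ q : s, Gc q • f q = sgn • (g q • f (q : ι)) := by
        intro q
        simp only [hGc, dif_pos q.2, mul_smul]
      rw [Finset.sum_congr rfl (fun q _ => this q)]
      rw [← Finset.smul_sum, hgsum, smul_zero]
    have hGp₁ : 0 < Gc p₁ := by
      simp only [hGc, dif_pos p₁.2]
      rcases lt_trichotomy (g p₁) 0 with h | h | h
      · simp only [hsgn, if_neg (not_lt.mpr h.le)]; nlinarith
      · exact absurd h hgp₁
      · simp only [hsgn, if_pos h]; nlinarith
    set I : Finset ι := s.filter (fun p => 0 < Gc p) with hI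
    have hIne : I.Nonempty := ⟨p₁, Finset.mem_filter.mpr ⟨p₁.2, hGp₁⟩⟩
    obtain ⟨p₀, hp₀I, hp₀min⟩ := I.exists_min_image (fun p => c p / Gc p) hIne
    have hp₀s : (p₀ : ι) ∈ s := (Finset.mem_filter.mp hp₀I).1
    have hGp₀ : 0 < Gc p₀ := (Finset.mem_filter.mp hp₀I).2
    set lam : ℝ := c p₀ / Gc p₀ with hlam
    have hlam0 : 0 ≤ lam := div_nonneg (hc p₀ hp₀s) hGp₀.le
    set c' : ι → ℝ := fun p => c p - lam * Gc p with hc'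
    have hc'nn : ∀ p ∈ s, 0 ≤ c' p := by
      intro p hp
      simp only [hc']
      by_cases hGp : 0 < Gc p
      · have := hp₀min p (Finset.mem_filter.mpr ⟨hp, hGp⟩)
        rw [div_le_div_iff₀ hGp₀ hGp] at this
        have h2 : lam * Gc p ≤ c p := by
          rw [hlam, div_mul_eq_mul_div, div_le_iff₀ hGp₀]
          linarith [this]
        linarith
      · have : lam * Gc p ≤ 0 := mul_nonpos_of_nonneg_of_nonpos hlam0 (not_lt.mp hGp)
        linarith [hc p hp]
    have hc'p₀ : c' p₀ = 0 := by
      simp only [hc', hlam]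
      field_simp
      ring
    have hsum' : ∑ p ∈ s, c' p • f p = ∑ p ∈ s, c p • f p := by
      simp only [hc', sub_smul, mul_smul]
      rw [Finset.sum_sub_distrib, ← Finset.smul_sum, hGsum, smul_zero, sub_zero]
    have hsum'' : ∑ p ∈ s.erase p₀, c' p • f p = ∑ p ∈ s, c p • f p := by
      rw [Finset.sum_erase _ (by rw [hc'p₀, zero_smul]), hsum']
    have hcard : (s.erase p₀).card ≤ n := by
      have := Finset.card_erase_of_mem hp₀s
      omega
    obtain ⟨t, c'', hts, hnn, heq, hli'⟩ := ih (s.erase p₀) hcard c'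
      (fun p hp => hc'nn p (Finset.mem_of_mem_erase hp))
    exact ⟨t, c'', hts.trans (Finset.erase_subset _ _), hnn, by rw [heq, hsum''], hli'⟩

/-- An ℝ-linearly independent family of Hermitian operators has at most `(dim E)²` members. -/
lemma herm_card_le' {E : Type*} [NormedAddCommGroup E] [InnerProductSpace ℂ E]
    [FiniteDimensional ℂ E] {ι : Type*} [Fintype ι]
    (f : ι → E →L[ℂ] E) (hf : ∀ p, ContinuousLinearMap.adjoint (f p) = f p)
    (hli : LinearIndependent ℝ f) : Fintype.card ι ≤ (Module.finrank ℂ E) ^ 2 := by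
  classical
  have hliC : LinearIndependent ℂ f := by
    rw [Fintype.linearIndependent_iff]
    intro z hz
    have hz' : ∑ p, conj (z p) • f p = 0 := by
      have := congrArg (fun B => ContinuousLinearMap.adjoint B) hz
      simp only [map_sum, map_zero] at this
      rw [← this]
      refine Finset.sum_congr rfl fun p _ => ?_
      rw [LinearIsometryEquiv.map_smulₛₗ, hf p]
    have hre : ∀ p, (z p).re = 0 := by
      have hadd : ∑ p, ((2 * (z p).re : ℝ) : ℂ) • f p = 0 := by
        have := congrArg₂ (· + ·) hz hz'
        simp only [← Finset.sum_add_distrib, ← add_smul, add_zero] at this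
        simpa [Complex.add_conj] using this
      have hR : ∑ p, (2 * (z p).re) • f p = 0 := by
        simpa [← algebraMap_smul (R := ℝ) ℂ, Complex.coe_algebraMap] using hadd
      intro p
      have := (Fintype.linearIndependent_iff.mp hli) _ hR p
      linarith
    have him : ∀ p, (z p).im = 0 := by
      have hsub : ∑ p, (((2 * (z p).im : ℝ) : ℂ) * Complex.I) • f p = 0 := by
        have := congrArg₂ (· - ·) hz hz'
        simp only [← Finset.sum_sub_distrib, ← sub_smul, sub_zero] at this
        simpa [Complex.sub_conj] using this
      have hI : Complex.I • ∑ p, ((2 * (z p).im : ℝ) : ℂ) • f p = 0 := by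
        rw [Finset.smul_sum]
        rw [← hsub]
        refine Finset.sum_congr rfl fun p _ => ?_
        rw [smul_smul, mul_comm]
      have h0 : ∑ p, ((2 * (z p).im : ℝ) : ℂ) • f p = 0 := by
        rcases smul_eq_zero.mp hI with h | h
        · exact absurd h Complex.I_ne_zero
        · exact h
      have hR : ∑ p, (2 * (z p).im) • f p = 0 := by
        simpa [← algebraMap_smul (R := ℝ) ℂ, Complex.coe_algebraMap] using h0
      intro p
      have := (Fintype.linearIndependent_iff.mp hli) _ hR p
      linarith
    intro p
    exact Complex.ext (hre p) (him p)
  have h1 : Fintype.card ι ≤ Module.finrank ℂ (E →L[ℂ] E) :=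
    hliC.fintype_card_le_finrank
  have h2 : Module.finrank ℂ (E →L[ℂ] E) = (Module.finrank ℂ E) ^ 2 := by
    rw [← LinearEquiv.finrank_eq (LinearMap.toContinuousLinearMap (𝕜 := ℂ) (E := E) (F' := E))]
    rw [Module.finrank_linearMap, sq]
  omega

lemma addChar_map_sum' {G : Type*} [AddCommGroup G] (χ : AddChar G ℂ) {ι : Type*}
    (s : Finset ι) (f : ι → G) : χ (∑ i ∈ s, f i) = ∏ i ∈ s, χ (f i) := by
  classical
  induction s using Finset.cons_induction with
  | empty => simp
  | cons a s ha ih => rw [Finset.sum_cons, Finset.prod_cons, AddChar.map_add_eq_mul, ih]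

lemma tensorConv_eq_sum' {G : Type*} [AddCommGroup G] [Fintype G] [DecidableEq G]
    (T : MultilinearMap ℂ H E) (Φ : ∀ μ, G → H μ) (g : G) :
    tensorConv T Φ g
      = ∑ h : Fin (m + 1) → G, if (∑ μ, h μ) = g then T (fun μ => Φ μ (h μ)) else 0 := by
  classical
  rw [← Fintype.sum_equiv (Fin.consEquiv fun _ : Fin (m + 1) => G)
    (fun p => if (∑ μ, (Fin.cons (α := fun _ => G) p.1 p.2) μ) = g
        then T (fun μ => Φ μ (Fin.cons (α := fun _ => G) p.1 p.2 μ)) else 0)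
    (fun h => if (∑ μ, h μ) = g then T (fun μ => Φ μ (h μ)) else 0)
    (fun p => rfl)]
  rw [Fintype.sum_prod_type, Finset.sum_comm]
  refine Finset.sum_congr rfl fun k _ => ?_
  symm
  have hcond : ∀ a : G, ((∑ μ, (Fin.cons (α := fun _ => G) a k) μ) = g) ↔ (a = g - ∑ j, k j) := by
    intro a
    rw [Fin.sum_cons, eq_sub_iff_add_eq]
  calc ∑ a : G, (if (∑ μ, (Fin.cons (α := fun _ => G) a k) μ) = g
          then T (fun μ => Φ μ (Fin.cons (α := fun _ => G) a k μ)) else 0)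
      = ∑ a : G, (if a = g - ∑ j, k j
          then T (fun μ => Φ μ (Fin.cons (α := fun _ => G) a k μ)) else 0) := by
        exact Finset.sum_congr rfl fun a _ => if_congr (hcond a) rfl rfl
    _ = T fun μ => Φ μ (Fin.cons (α := fun _ => G) (g - ∑ j, k j) k μ) := by
        rw [Finset.sum_ite_eq' Finset.univ (g - ∑ j, k j)
          (fun a => T fun μ => Φ μ (Fin.cons (α := fun _ => G) a k μ))]
        simp

lemma T_fourier' {G : Type*} [AddCommGroup G] [Fintype G]
    (T : MultilinearMap ℂ H E) (Φ : ∀ μ, G → H μ) (χ : AddChar G ℂ) :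
    (T fun μ => ∑ g : G, χ g • Φ μ g)
      = ∑ h : Fin (m + 1) → G, χ (∑ μ, h μ) • T (fun μ => Φ μ (h μ)) := by
  classical
  rw [MultilinearMap.map_sum]
  refine Finset.sum_congr rfl fun h _ => ?_
  rw [MultilinearMap.map_smul_univ]
  rw [addChar_map_sum']

lemma L1' {G : Type*} [AddCommGroup G] [Fintype G] [DecidableEq G]
    (n : ℂ) (a b : G) (u v w : E) :
    (∑ x : G, n • (inner ℂ (if a = x then u else 0) w : ℂ) • (if b = x then v else 0))
      = if b = a then n • (inner ℂ u w : ℂ) • v else 0 := by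
  by_cases h2 : b = a
  · rw [if_pos h2]
    rw [Finset.sum_eq_single a]
    · simp [h2]
    · intro x _ hx
      rw [if_neg (fun h => hx h.symm)]
      simp
    · intro h; exact absurd (Finset.mem_univ a) h
  · rw [if_neg h2]
    refine Finset.sum_eq_zero fun x _ => ?_
    by_cases h1 : a = x
    · rw [if_neg (fun h : b = x => h2 (h.trans h1.symm))]
      simp
    · rw [if_neg h1]
      simp

lemma R1' {G : Type*} [AddCommGroup G] [Fintype G] [DecidableEq G]
    (a : G) (u w : E) {κ : Type*} [Fintype κ] (b : κ → G) (v : κ → E) :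
    (∑ χ : AddChar G ℂ, (inner ℂ (χ a • u) w : ℂ) • (∑ h, χ (b h) • v h))
      = ∑ h, if b h = a then (Fintype.card G : ℂ) • (inner ℂ u w : ℂ) • v h else 0 := by
  have orth : ∀ x y : G, ∑ χ : AddChar G ℂ, χ x * conj (χ y)
      = if x = y then (Fintype.card G : ℂ) else 0 := by
    intro x y
    have : ∀ χ : AddChar G ℂ, χ x * conj (χ y) = χ (x - y) := by
      intro χ
      rw [← AddChar.map_neg_eq_conj, ← AddChar.map_add_eq_mul, sub_eq_add_neg]
    simp_rw [this]
    rw [AddChar.sum_apply_eq_ite]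
    congr 1
    rw [eq_iff_iff, sub_eq_zero]
  calc (∑ χ : AddChar G ℂ, (inner ℂ (χ a • u) w : ℂ) • (∑ h, χ (b h) • v h))
      = ∑ χ : AddChar G ℂ, ∑ h, (χ (b h) * conj (χ a)) • ((inner ℂ u w : ℂ) • v h) := by
        refine Finset.sum_congr rfl fun χ _ => ?_
        rw [inner_smul_left, Finset.smul_sum]
        refine Finset.sum_congr rfl fun h _ => ?_
        rw [smul_smul, smul_smul]
        congr 1
        ring
    _ = ∑ h, (∑ χ : AddChar G ℂ, χ (b h) * conj (χ a)) • ((inner ℂ u w : ℂ) • v h) := by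
        rw [Finset.sum_comm]
        exact Finset.sum_congr rfl fun h _ => (Finset.sum_smul).symm
    _ = ∑ h, if b h = a then (Fintype.card G : ℂ) • (inner ℂ u w : ℂ) • v h else 0 := by
        refine Finset.sum_congr rfl fun h _ => ?_
        rw [orth, ite_smul, zero_smul]

/-- The key Fourier identity: `|G| • ∑_g |ψ(g)⟩⟨ψ(g)| = ∑_χ |T(Φ̂(χ))⟩⟨T(Φ̂(χ))|` where
`ψ` is the tensor convolution of `Φ` and `Φ̂` its Fourier transform. -/
lemma key_identity' {G : Type*} [AddCommGroup G] [Fintype G]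
    (T : MultilinearMap ℂ H E) (Φ : ∀ μ, G → H μ) :
    (Fintype.card G : ℂ) • ∑ g : G, rankOne (tensorConv T Φ g)
      = ∑ χ : AddChar G ℂ, rankOne (T fun μ => ∑ g : G, χ g • Φ μ g) := by
  classical
  set t : (Fin (m + 1) → G) → E := fun h => T fun μ => Φ μ (h μ) with ht
  ext w
  have expandL : ∀ g : G, tensorConv T Φ g = ∑ h, if (∑ μ, h μ) = g then t h else 0 :=
    tensorConv_eq_sum' T Φ
  rw [ContinuousLinearMap.smul_apply, ContinuousLinearMap.sum_apply]
  simp_rw [expandL, rankOne_apply', sum_inner, Finset.sum_smul, Finset.smul_sum]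
  rw [ContinuousLinearMap.sum_apply]
  simp_rw [rankOne_apply', T_fourier' T Φ, sum_inner, Finset.sum_smul]
  conv_rhs => rw [Finset.sum_comm]
  conv_rhs => enter [2, y]; rw [R1' (∑ μ, y μ) (t y) w (fun h => ∑ μ, h μ) t]
  conv_lhs => rw [Finset.sum_comm]
  conv_lhs => enter [2, x1]; rw [Finset.sum_comm]
  conv_lhs => enter [2, x1, 2, x2]
              rw [L1' (Fintype.card G : ℂ) (∑ μ, x1 μ) (∑ μ, x2 μ) (t x1) (t x2) w]

/-- For a finite abelian group `G` with `|G| ≥ (dim H)²`, a Hermitian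
operator `A` on `H = H₁⊗⋯⊗Hₘ` is separable iff it is of the form
`Σ_g |(Φ¹⋆⋯⋆Φᵐ)(g)⟩⟨(Φ¹⋆⋯⋆Φᵐ)(g)|` for some mappings `Φ^μ : G → H_μ`. -/
theorem isSeparableOp_iff_exists_tensorConv
    [∀ μ, FiniteDimensional ℂ (H μ)] [FiniteDimensional ℂ E]
    {G : Type*} [AddCommGroup G] [Fintype G]
    (T : MultilinearMap ℂ H E)
    (hT : ∀ v w : ∀ μ, H μ, (inner ℂ (T v) (T w) : ℂ) = ∏ μ, (inner ℂ (v μ) (w μ) : ℂ))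
    (hspan : Submodule.span ℂ (Set.range fun v => T v) = ⊤)
    (hG : (Module.finrank ℂ E) ^ 2 ≤ Fintype.card G)
    (A : E →L[ℂ] E) (hA : ContinuousLinearMap.adjoint A = A) :
    IsSeparableOp T A ↔
      ∃ Φ : ∀ μ, G → H μ, A = ∑ g : G, rankOne (tensorConv T Φ g) := by
  classical
  have hn0 : 0 < Fintype.card G := Fintype.card_pos
  have hnC : (Fintype.card G : ℂ) ≠ 0 := Nat.cast_ne_zero.mpr hn0.ne'
  constructor
  · rintro ⟨P, c, v, hcpos, hAeq⟩
    set f : Fin P → (E →L[ℂ] E) := fun p => rankOne (T (v p)) with hf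
    have hAr : A = ∑ p ∈ Finset.univ, c p • f p := by
      rw [hAeq]
      exact Finset.sum_congr rfl fun p _ => by
        rw [← algebraMap_smul (R := ℝ) ℂ (c p) (f p), Complex.coe_algebraMap]
    obtain ⟨t, c', hts, hc'nn, hsum, hli⟩ :=
      cone_reduce' f P Finset.univ (by simp) c (fun p _ => (hcpos p).le)
    have hcard : Fintype.card ↥t ≤ Fintype.card (AddChar G ℂ) := by
      have h1 : Fintype.card ↥t ≤ (Module.finrank ℂ E) ^ 2 :=
        herm_card_le' (fun p : ↥t => f p) (fun p => rankOne_adjoint' _) hli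
      rw [AddChar.card_eq]
      omega
    obtain ⟨e⟩ := Function.Embedding.nonempty_of_card_le hcard
    set vec : ↥t → ∀ μ, H μ := fun p =>
      Function.update (v p) 0 ((Real.sqrt (Fintype.card G * c' p) : ℂ) • v p 0) with hvec
    have hTvec : ∀ p : ↥t, T (vec p) = (Real.sqrt (Fintype.card G * c' p) : ℂ) • T (v p) := by
      intro p
      show T (Function.update (v p) 0 _) = _
      rw [MultilinearMap.map_update_smul, Function.update_eq_self]
    have hrankvec : ∀ p : ↥t, rankOne (T (vec p)) = ((Fintype.card G : ℂ) * (c' p : ℂ)) • f p := by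
      intro p
      rw [hTvec, rankOne_smul']
      congr 1
      rw [Complex.conj_ofReal, ← Complex.ofReal_mul,
        Real.mul_self_sqrt (mul_nonneg (Nat.cast_nonneg _) (hc'nn p p.2))]
      push_cast
      ring
    set Φ : ∀ μ, G → H μ := fun μ g =>
      ∑ p : ↥t, (((Fintype.card G : ℂ))⁻¹ * conj (e p g)) • vec p μ with hΦ
    refine ⟨Φ, ?_⟩
    have hU : ∀ (χ : AddChar G ℂ) (μ : Fin (m + 1)), (∑ g : G, χ g • Φ μ g)
        = ∑ p : ↥t, (if χ = e p then (1 : ℂ) else 0) • vec p μ := by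
      intro χ μ
      calc ∑ g : G, χ g • Φ μ g
          = ∑ g : G, ∑ p : ↥t,
              (χ g * ((Fintype.card G : ℂ)⁻¹ * conj (e p g))) • vec p μ := by
            refine Finset.sum_congr rfl fun g _ => ?_
            rw [hΦ, Finset.smul_sum]
            exact Finset.sum_congr rfl fun p _ => (smul_smul _ _ _)
        _ = ∑ p : ↥t, ((Fintype.card G : ℂ)⁻¹ * ∑ g : G, χ g * conj (e p g)) • vec p μ := by
            rw [Finset.sum_comm]
            refine Finset.sum_congr rfl fun p _ => ?_
            rw [Finset.mul_sum, ← Finset.sum_smul]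
            refine congrArg (· • vec p μ) ?_
            exact Finset.sum_congr rfl fun g _ => by ring
        _ = ∑ p : ↥t, (if χ = e p then (1 : ℂ) else 0) • vec p μ := by
            refine Finset.sum_congr rfl fun p _ => ?_
            rw [addChar_orth' χ (e p), mul_ite, mul_zero, inv_mul_cancel₀ hnC]
    have hU1 : ∀ q : ↥t, (fun μ => ∑ g : G, (e q) g • Φ μ g) = vec q := by
      intro q
      funext μ
      rw [hU]
      rw [Finset.sum_eq_single q]
      · rw [if_pos rfl, one_smul]
      · intro p _ hp
        rw [if_neg (fun h => hp (e.injective h).symm), zero_smul]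
      · intro h; exact absurd (Finset.mem_univ q) h
    have hU0 : ∀ χ : AddChar G ℂ, (∀ q : ↥t, χ ≠ e q) →
        (T fun μ => ∑ g : G, χ g • Φ μ g) = 0 := by
      intro χ hχ
      refine T.map_coord_zero 0 ?_
      rw [hU]
      exact Finset.sum_eq_zero fun p _ => by rw [if_neg (hχ p), zero_smul]
    have hRHS : ∑ χ : AddChar G ℂ, rankOne (T fun μ => ∑ g : G, χ g • Φ μ g)
        = (Fintype.card G : ℂ) • A := by
      rw [← Finset.sum_subset (Finset.subset_univ (Finset.univ.map e))
        (fun χ _ hχ => by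
          rw [hU0 χ (fun q hq => hχ (Finset.mem_map.mpr ⟨q, Finset.mem_univ q, hq.symm⟩))]
          exact rankOne_zero')]
      rw [Finset.sum_map]
      calc ∑ q : ↥t, rankOne (T fun μ => ∑ g : G, (e q) g • Φ μ g)
          = ∑ q : ↥t, ((Fintype.card G : ℂ) * (c' q : ℂ)) • f q := by
            refine Finset.sum_congr rfl fun q _ => ?_
            rw [hU1 q, hrankvec q]
        _ = (Fintype.card G : ℂ) • ∑ q : ↥t, (c' q : ℂ) • f q := by
            rw [Finset.smul_sum]
            exact Finset.sum_congr rfl fun q _ => (smul_smul _ _ _).symm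
        _ = (Fintype.card G : ℂ) • A := by
            congr 1
            have : ∀ q : ↥t, (c' q : ℂ) • f q = c' q • f (q : Fin P) := fun q => by
              rw [← algebraMap_smul (R := ℝ) ℂ (c' q) (f (q : Fin P)), Complex.coe_algebraMap]
            rw [Finset.sum_congr rfl fun q _ => this q, Finset.sum_coe_sort t
              (fun p => c' p • f p), hsum, ← hAr]
    have hkey := key_identity' T Φ
    rw [hRHS] at hkey
    calc A = (Fintype.card G : ℂ)⁻¹ • ((Fintype.card G : ℂ) • A) := by
            rw [smul_smul, inv_mul_cancel₀ hnC, one_smul]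
      _ = (Fintype.card G : ℂ)⁻¹ • ((Fintype.card G : ℂ) •
            ∑ g : G, rankOne (tensorConv T Φ g)) := by rw [hkey]
      _ = ∑ g : G, rankOne (tensorConv T Φ g) := by
            rw [smul_smul, inv_mul_cancel₀ hnC, one_smul]
  · rintro ⟨Φ, hAeq⟩
    have hkey := key_identity' T Φ
    rw [← hAeq] at hkey
    refine ⟨Fintype.card (AddChar G ℂ), fun _ => ((Fintype.card G : ℝ))⁻¹,
      fun p μ => ∑ g : G, ((Fintype.equivFin (AddChar G ℂ)).symm p) g • Φ μ g,
      fun p => inv_pos.mpr (Nat.cast_pos.mpr hn0), ?_⟩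
    have hA' : A = ∑ χ : AddChar G ℂ, (Fintype.card G : ℂ)⁻¹ •
        rankOne (T fun μ => ∑ g : G, χ g • Φ μ g) := by
      calc A = (Fintype.card G : ℂ)⁻¹ • ((Fintype.card G : ℂ) • A) := by
              rw [smul_smul, inv_mul_cancel₀ hnC, one_smul]
        _ = (Fintype.card G : ℂ)⁻¹ •
              ∑ χ : AddChar G ℂ, rankOne (T fun μ => ∑ g : G, χ g • Φ μ g) := by rw [hkey]
        _ = ∑ χ : AddChar G ℂ, (Fintype.card G : ℂ)⁻¹ •
              rankOne (T fun μ => ∑ g : G, χ g • Φ μ g) := Finset.smul_sum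
    rw [hA']
    refine Fintype.sum_equiv (Fintype.equivFin (AddChar G ℂ)) _ _ fun χ => ?_
    simp only [Equiv.symm_apply_apply, Complex.ofReal_inv, Complex.ofReal_natCast]
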